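/- arXiv:0705.1818 — 5 statements merged into one kernel-verified Lean document; each statement's English description precedes it below -/
import Mathlib

section
/- Let K : ℝ^{2n} → ℝ be a nonnegative differentiable function whose gradient is Lipschitz with constant L, and let γ : [0,T] → ℝ^{2n} be a solution of γ'(t) = J∇K(γ(t)) such that K(γ(t)) = r² for all t ∈ [0,T]. Then the length of γ satisfies l(γ) = ∫₀ᵀ ‖γ'(t)‖ dt ≤ √(2L)·r·T. (This is the paper's length estimate l(γ) ≤ const·r·T for an integral curve of K on the level K = r² near the critical manifold, stated in a Darboux chart.) -/
open scoped RealInnerProductSpace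

/-- The standard complex structure `J` on `ℝ^{2n}`, realized on
`EuclideanSpace ℝ (Fin n ⊕ Fin n)` with Darboux coordinates `(x, y)`:
`J (x, y) = (-y, x)`. -/
noncomputable def Jstd (n : ℕ) (v : EuclideanSpace ℝ (Fin n ⊕ Fin n)) :
    EuclideanSpace ℝ (Fin n ⊕ Fin n) :=
  WithLp.toLp 2 fun i =>
    match i with
    | Sum.inl k => -v (Sum.inr k)
    | Sum.inr k => v (Sum.inl k)

lemma Jstd_norm (n : ℕ) (v : EuclideanSpace ℝ (Fin n ⊕ Fin n)) : ‖Jstd n v‖ = ‖v‖ := by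
  simp only [EuclideanSpace.norm_eq]
  congr 1
  simp [Jstd, Fintype.sum_sum_type, add_comm]

variable {E : Type*} [NormedAddCommGroup E] [InnerProductSpace ℝ E] [CompleteSpace E]

lemma descent (K : E → ℝ) (hK : Differentiable ℝ K) (L : ℝ) (hL : 0 ≤ L)
    (hLip : LipschitzWith L.toNNReal (fun x => gradient K x)) (x v : E) :
    K (x + v) ≤ K x + ⟪gradient K x, v⟫ + L / 2 * ‖v‖ ^ 2 := by
  have hgc : Continuous (fun y => gradient K y) := hLip.continuous
  have hφ : ∀ t : ℝ, HasDerivAt (fun t : ℝ => K (x + t • v))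
      (⟪gradient K (x + t • v), v⟫) t := by
    intro t
    have h1 : HasDerivAt (fun t : ℝ => x + t • v) v t := by
      simpa using ((hasDerivAt_id t).smul_const v).const_add x
    have h2 := ((hK (x + t • v)).hasGradientAt.hasFDerivAt).comp_hasDerivAt t h1
    simpa [InnerProductSpace.toDual_apply_apply, Function.comp_def] using h2
  have hcont : Continuous (fun t : ℝ => ⟪gradient K (x + t • v), v⟫) := by
    exact (hgc.comp (by continuity)).inner continuous_const
  have heq : K (x + v) - K x = ∫ t in (0:ℝ)..1, ⟪gradient K (x + t • v), v⟫ := by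
    rw [intervalIntegral.integral_eq_sub_of_hasDerivAt (fun t _ => hφ t)
      (hcont.intervalIntegrable 0 1)]
    simp
  have hbound : ∀ t ∈ Set.Icc (0:ℝ) 1,
      ⟪gradient K (x + t • v), v⟫ ≤ ⟪gradient K x, v⟫ + L * t * ‖v‖ ^ 2 := by
    intro t ht
    have : ⟪gradient K (x + t • v), v⟫ - ⟪gradient K x, v⟫
        = ⟪gradient K (x + t • v) - gradient K x, v⟫ := by
      rw [inner_sub_left]
    have hcs : ⟪gradient K (x + t • v) - gradient K x, v⟫
        ≤ ‖gradient K (x + t • v) - gradient K x‖ * ‖v‖ :=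
      real_inner_le_norm _ _
    have hlip' : ‖gradient K (x + t • v) - gradient K x‖ ≤ L * (t * ‖v‖) := by
      have h0 := hLip.dist_le_mul (x + t • v) x
      rw [dist_eq_norm, dist_eq_norm] at h0
      have he : x + t • v - x = t • v := by abel
      rw [he] at h0
      calc ‖gradient K (x + t • v) - gradient K x‖ ≤ L.toNNReal * ‖t • v‖ := h0
        _ = L * (|t| * ‖v‖) := by rw [norm_smul, Real.coe_toNNReal _ hL]; norm_num
        _ = L * (t * ‖v‖) := by rw [abs_of_nonneg ht.1]
    nlinarith [norm_nonneg v, ht.1, ht.2, norm_nonneg (gradient K (x + t • v) - gradient K x)]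
  have hint : ∫ t in (0:ℝ)..1, ⟪gradient K (x + t • v), v⟫
      ≤ ∫ t in (0:ℝ)..1, (⟪gradient K x, v⟫ + L * t * ‖v‖ ^ 2) := by
    apply intervalIntegral.integral_mono_on (by norm_num)
      (hcont.intervalIntegrable 0 1)
      ((by continuity : Continuous fun t : ℝ => ⟪gradient K x, v⟫ + L * t * ‖v‖ ^ 2).intervalIntegrable 0 1)
      hbound
  have hval : ∫ t in (0:ℝ)..1, (⟪gradient K x, v⟫ + L * t * ‖v‖ ^ 2)
      = ⟪gradient K x, v⟫ + L / 2 * ‖v‖ ^ 2 := by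
    have hi1 : IntervalIntegrable (fun _ : ℝ => (⟪gradient K x, v⟫ : ℝ)) MeasureTheory.volume 0 1 :=
      continuous_const.intervalIntegrable 0 1
    have hi2 : IntervalIntegrable (fun t : ℝ => L * t * ‖v‖ ^ 2) MeasureTheory.volume 0 1 :=
      ((continuous_const.mul continuous_id).mul continuous_const).intervalIntegrable 0 1
    rw [intervalIntegral.integral_add hi1 hi2]
    have h2 : (fun t : ℝ => L * t * ‖v‖ ^ 2) = fun t : ℝ => (L * ‖v‖ ^ 2) * t := by
      funext t; ring
    rw [h2, intervalIntegral.integral_const_mul, integral_id, intervalIntegral.integral_const]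
    simp; ring
  linarith [heq, hint, hval.le, hval.ge]

lemma grad_sq_le (K : E → ℝ) (hK : Differentiable ℝ K) (hKnn : ∀ x, 0 ≤ K x)
    (L : ℝ) (hL : 0 ≤ L)
    (hLip : LipschitzWith L.toNNReal (fun x => gradient K x)) (x : E) :
    ‖gradient K x‖ ^ 2 ≤ 2 * L * K x := by
  set g := gradient K x with hg
  rcases eq_or_lt_of_le hL with hL0 | hLpos
  · -- L = 0
    subst hL0
    have h0 : ∀ s : ℝ, 0 ≤ s → 0 ≤ K x - s * ‖g‖ ^ 2 := by
      intro s hs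
      have hd := descent K hK 0 le_rfl hLip x (-(s • g))
      have h2 : ⟪g, -(s • g)⟫ = -(s * ‖g‖ ^ 2) := by
        rw [inner_neg_right, real_inner_smul_right, real_inner_self_eq_norm_sq]
      rw [h2] at hd
      have h4 := hKnn (x + -(s • g))
      simp only [zero_div, zero_mul, add_zero] at hd
      linarith
    by_contra h
    push_neg at h
    have hgpos : 0 < ‖g‖ ^ 2 := by nlinarith [hKnn x, sq_nonneg ‖g‖]
    have := h0 ((K x + 1) / ‖g‖ ^ 2) (div_nonneg (by linarith [hKnn x]) (sq_nonneg _))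
    rw [div_mul_cancel₀ _ (ne_of_gt hgpos)] at this
    linarith
  · have hd := descent K hK L hL hLip x (-((1/L) • g))
    have h2 : ⟪g, -((1/L) • g)⟫ = -((1/L) * ‖g‖ ^ 2) := by
      rw [inner_neg_right, real_inner_smul_right, real_inner_self_eq_norm_sq]
    have h3 : ‖-((1/L) • g)‖ ^ 2 = (1/L)^2 * ‖g‖^2 := by
      rw [norm_neg, norm_smul]
      simp [mul_pow, abs_of_nonneg (le_of_lt (by positivity : (0:ℝ) < 1/L))]
    have h4 := hKnn (x + -((1/L) • g))
    rw [h2, h3] at hd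
    have h5 : 0 ≤ K x - (1/L) * ‖g‖^2 + L/2 * ((1/L)^2 * ‖g‖^2) := by linarith
    have hLne : L ≠ 0 := ne_of_gt hLpos
    have e1 : (1/L) * ‖g‖^2 - L/2 * ((1/L)^2 * ‖g‖^2) = ‖g‖^2 / (2*L) := by
      field_simp; ring
    have h6 : ‖g‖^2 / (2*L) ≤ K x := by linarith
    have h7 := (div_le_iff₀ (by positivity : (0:ℝ) < 2*L)).mp h6
    linarith

/-- Length estimate: if `K ≥ 0` is differentiable with `L`-Lipschitz gradient
and `γ : [0, T] → ℝ^{2n}` is an integral curve of the Hamiltonian vector field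
`J∇K` lying on the level `K = r²`, then `l(γ) = ∫₀ᵀ ‖γ' t‖ dt ≤ √(2L)·r·T`. -/
theorem stmt2 (n : ℕ) (K : EuclideanSpace ℝ (Fin n ⊕ Fin n) → ℝ)
    (hK : Differentiable ℝ K) (hKnn : ∀ x, 0 ≤ K x)
    (L : ℝ) (hL : 0 ≤ L)
    (hLip : LipschitzWith L.toNNReal (fun x => gradient K x))
    (T r : ℝ) (hT : 0 ≤ T) (hr : 0 ≤ r)
    (γ γ' : ℝ → EuclideanSpace ℝ (Fin n ⊕ Fin n))
    (hγ : ∀ t ∈ Set.Icc (0 : ℝ) T, HasDerivAt γ (γ' t) t)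
    (hode : ∀ t ∈ Set.Icc (0 : ℝ) T, γ' t = Jstd n (gradient K (γ t)))
    (hlevel : ∀ t ∈ Set.Icc (0 : ℝ) T, K (γ t) = r ^ 2) :
    ∫ t in (0 : ℝ)..T, ‖γ' t‖ ≤ Real.sqrt (2 * L) * r * T := by
  set C := Real.sqrt (2 * L) * r with hC
  have hCnn : 0 ≤ C := by positivity
  have hbd : ∀ t ∈ Set.Icc (0:ℝ) T, ‖γ' t‖ ≤ C := by
    intro t ht
    rw [hode t ht, Jstd_norm]
    have h1 := grad_sq_le K hK hKnn L hL hLip (γ t)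
    rw [hlevel t ht] at h1
    have : ‖gradient K (γ t)‖ ^ 2 ≤ C ^ 2 := by
      rw [hC, mul_pow, Real.sq_sqrt (by positivity)]
      nlinarith
    calc ‖gradient K (γ t)‖ = Real.sqrt (‖gradient K (γ t)‖ ^ 2) :=
          (Real.sqrt_sq (norm_nonneg _)).symm
      _ ≤ Real.sqrt (C ^ 2) := Real.sqrt_le_sqrt this
      _ = C := Real.sqrt_sq hCnn
  have key : ‖∫ t in (0:ℝ)..T, ‖γ' t‖‖ ≤ C * |T - 0| := by
    apply intervalIntegral.norm_integral_le_of_norm_le_const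
    intro t ht
    rw [Set.uIoc_of_le hT] at ht
    have ht' : t ∈ Set.Icc (0:ℝ) T := ⟨ht.1.le, ht.2⟩
    simpa [Real.norm_eq_abs, abs_of_nonneg (norm_nonneg (γ' t))] using hbd t ht'
  calc ∫ t in (0:ℝ)..T, ‖γ' t‖ ≤ ‖∫ t in (0:ℝ)..T, ‖γ' t‖‖ := le_abs_self _
    _ ≤ C * |T - 0| := key
    _ = Real.sqrt (2 * L) * r * T := by rw [sub_zero, abs_of_nonneg hT, hC]
end

section
/- Let K : ℝ^{2m} × ℝ^{2k} → ℝ be a smooth (C^∞, or at least C³) function with K ≥ 0 and K(x,0) = 0 for all x, and assume that for every x the Hessian at y = 0 of the function y ↦ K(x,y) is positive definite (Morse–Bott non-degeneracy of the minimum along {y = 0} in the normal direction). Then for every compact set Q ⊆ ℝ^{2m} there exist constants a > 0, b ≥ 0 and δ > 0 such that for all (x,y) with x ∈ Q and ‖y‖ ≤ δ and all vectors (X,Y) ∈ ℝ^{2m} × ℝ^{2k}, the second derivative of K satisfies d²K_{(x,y)}((X,Y),(X,Y)) ≥ a‖Y‖² − b·r·‖X‖², where r = √(K(x,y)). (This is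 the paper's Hessian lower bound (DF2)/(3.4) in a product chart: the fiber contribution to the Hessian is positive of size a, while the base contribution is only of size r.) -/
open ContinuousLinearMap in
lemma aux_partial {E F : Type*} [NormedAddCommGroup E] [NormedSpace ℝ E]
    [NormedAddCommGroup F] [NormedSpace ℝ F]
    (K : E × F → ℝ) (hK : ContDiff ℝ 3 K) (x : E) (Y : F) :
    fderiv ℝ (fderiv ℝ (fun y => K (x, y))) 0 Y Y
      = fderiv ℝ (fderiv ℝ K) (x, 0) ((0 : E), Y) ((0 : E), Y) := by
  have hKd : Differentiable ℝ K := hK.differentiable (by norm_num)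
  have hK' : ContDiff ℝ 2 (fderiv ℝ K) := hK.fderiv_right (by norm_num)
  have hK'd : Differentiable ℝ (fderiv ℝ K) := hK'.differentiable (by norm_num)
  have step1 : ∀ y : F, HasFDerivAt (fun y' => K (x, y'))
      ((fderiv ℝ K (x, y)).comp (inr ℝ E F)) y := fun y =>
    ((hKd (x, y)).hasFDerivAt).comp y (hasFDerivAt_prodMk_right x y)
  have e1 : fderiv ℝ (fun y' => K (x, y')) =
      fun y => ((compL ℝ F (E × F) ℝ).flip (inr ℝ E F)) (fderiv ℝ K (x, y)) :=
    funext fun y => (step1 y).fderiv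
  have step2 : HasFDerivAt (fun y : F => fderiv ℝ K (x, y))
      ((fderiv ℝ (fderiv ℝ K) (x, 0)).comp (inr ℝ E F)) 0 :=
    ((hK'd (x, 0)).hasFDerivAt).comp 0 (hasFDerivAt_prodMk_right x 0)
  have step3 : HasFDerivAt
      (fun y : F => ((compL ℝ F (E × F) ℝ).flip (inr ℝ E F)) (fderiv ℝ K (x, y)))
      (((compL ℝ F (E × F) ℝ).flip (inr ℝ E F)).comp
        ((fderiv ℝ (fderiv ℝ K) (x, 0)).comp (inr ℝ E F))) 0 :=
    (((compL ℝ F (E × F) ℝ).flip (inr ℝ E F)).hasFDerivAt).comp 0 step2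
  rw [e1, step3.fderiv]
  simp

open ContinuousLinearMap in
lemma aux_base {E F : Type*} [NormedAddCommGroup E] [NormedSpace ℝ E]
    [NormedAddCommGroup F] [NormedSpace ℝ F]
    (K : E × F → ℝ) (hK : ContDiff ℝ 3 K)
    (hKnn : ∀ p, 0 ≤ K p) (hK0 : ∀ x : E, K (x, 0) = 0) (x : E) (X : E) :
    fderiv ℝ (fderiv ℝ K) (x, (0 : F)) (X, (0 : F)) = 0 := by
  have hK' : ContDiff ℝ 2 (fderiv ℝ K) := hK.fderiv_right (by norm_num)
  have hK'd : Differentiable ℝ (fderiv ℝ K) := hK'.differentiable (by norm_num)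
  have hmin : ∀ x' : E, fderiv ℝ K (x', 0) = 0 := by
    intro x'
    apply IsLocalMin.fderiv_eq_zero
    exact Filter.Eventually.of_forall (fun p => by rw [hK0]; exact hKnn p)
  have h1 : HasFDerivAt (fun x' : E => fderiv ℝ K (x', 0))
      ((fderiv ℝ (fderiv ℝ K) (x, 0)).comp (inl ℝ E F)) x :=
    ((hK'd (x, 0)).hasFDerivAt).comp x (hasFDerivAt_prodMk_left x 0)
  have h2 : HasFDerivAt (fun x' : E => fderiv ℝ K (x', 0))
      (0 : E →L[ℝ] (E × F →L[ℝ] ℝ)) x := by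
    have : (fun x' : E => fderiv ℝ K (x', 0)) = fun _ => (0 : E × F →L[ℝ] ℝ) :=
      funext fun x' => hmin x'
    rw [this]; exact hasFDerivAt_const _ _
  have := h1.unique h2
  have hX := congrFun (congrArg DFunLike.coe this) X
  simpa using hX

lemma aux_1d {g g' g'' : ℝ → ℝ} {A : ℝ}
    (hg : ∀ t ∈ Set.Icc (0:ℝ) 1, HasDerivAt g (g' t) t)
    (hg' : ∀ t ∈ Set.Icc (0:ℝ) 1, HasDerivAt g' (g'' t) t)
    (hA : ∀ t ∈ Set.Icc (0:ℝ) 1, A ≤ g'' t)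
    (h0 : g 0 = 0) (h0' : g' 0 = 0) : A / 2 ≤ g 1 := by
  have hint : interior (Set.Icc (0:ℝ) 1) = Set.Ioo 0 1 := interior_Icc
  have hl : ∀ t : ℝ, HasDerivAt (fun t : ℝ => A * t) A t := fun t => by
    simpa using (hasDerivAt_id t).const_mul A
  have m1 : MonotoneOn (fun t => g' t - A * t) (Set.Icc (0:ℝ) 1) := by
    apply monotoneOn_of_deriv_nonneg (convex_Icc 0 1)
    · exact fun t ht => (((hg' t ht).sub (hl t)).continuousAt).continuousWithinAt
    · rw [hint]
      exact fun t ht => (((hg' t (Set.Ioo_subset_Icc_self ht)).sub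
        (hl t)).differentiableAt).differentiableWithinAt
    · rw [hint]
      intro t ht
      have hd := ((hg' t (Set.Ioo_subset_Icc_self ht)).sub
        (hl t)).deriv
      rw [show deriv (fun t => g' t - A * t) t = g'' t - A from hd]
      have := hA t (Set.Ioo_subset_Icc_self ht)
      linarith
  have key1 : ∀ t ∈ Set.Icc (0:ℝ) 1, A * t ≤ g' t := by
    intro t ht
    have := m1 (Set.left_mem_Icc.2 zero_le_one) ht ht.1
    simp only [mul_zero, sub_zero, h0'] at this
    linarith
  have m2 : MonotoneOn (fun t => g t - A / 2 * t ^ 2) (Set.Icc (0:ℝ) 1) := by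
    have hq : ∀ t : ℝ, HasDerivAt (fun t => A / 2 * t ^ 2) (A * t) t := by
      intro t
      have := (hasDerivAt_pow 2 t).const_mul (A / 2)
      exact this.congr_deriv (by rw [show (2:ℕ) - 1 = 1 from rfl]; push_cast; ring)
    apply monotoneOn_of_deriv_nonneg (convex_Icc 0 1)
    · exact fun t ht => (((hg t ht).sub (hq t)).continuousAt).continuousWithinAt
    · rw [hint]
      exact fun t ht => (((hg t (Set.Ioo_subset_Icc_self ht)).sub
        (hq t)).differentiableAt).differentiableWithinAt
    · rw [hint]
      intro t ht
      rw [show deriv (fun t => g t - A / 2 * t ^ 2) t = g' t - A * t from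
        ((hg t (Set.Ioo_subset_Icc_self ht)).sub (hq t)).deriv]
      have := key1 t (Set.Ioo_subset_Icc_self ht)
      linarith
  have := m2 (Set.left_mem_Icc.2 zero_le_one) (Set.right_mem_Icc.2 zero_le_one) zero_le_one
  simp only [h0, one_pow, mul_one] at this
  linarith
set_option maxHeartbeats 4000000 in
lemma aux_main {E F : Type*} [NormedAddCommGroup E] [NormedSpace ℝ E]
    [NormedAddCommGroup F] [NormedSpace ℝ F]
    [FiniteDimensional ℝ E] [FiniteDimensional ℝ F]
    (K : E × F → ℝ) (hK : ContDiff ℝ 3 K)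
    (hKnn : ∀ p, 0 ≤ K p)
    (hK0 : ∀ x : E, K (x, 0) = 0)
    (hHess : ∀ x : E, ∀ Y : F, Y ≠ 0 →
        0 < fderiv ℝ (fderiv ℝ (fun y => K (x, y))) 0 Y Y)
    (Q : Set E) (hQ : IsCompact Q) :
    ∃ a > (0 : ℝ), ∃ b ≥ (0 : ℝ), ∃ δ > (0 : ℝ),
      ∀ x ∈ Q, ∀ y : F, ‖y‖ ≤ δ →
        ∀ (X : E) (Y : F),
          a * ‖Y‖ ^ 2 - b * Real.sqrt (K (x, y)) * ‖X‖ ^ 2 ≤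
            fderiv ℝ (fderiv ℝ K) (x, y) (X, Y) (X, Y) := by
  classical
  rcases Q.eq_empty_or_nonempty with rfl | hQne
  · exact ⟨1, one_pos, 0, le_refl 0, 1, one_pos, by simp⟩
  set H : E × F → (E × F →L[ℝ] E × F →L[ℝ] ℝ) := fderiv ℝ (fderiv ℝ K) with hHdef
  have hKd : Differentiable ℝ K := hK.differentiable (by norm_num)
  have hK' : ContDiff ℝ 2 (fderiv ℝ K) := hK.fderiv_right (by norm_num)
  have hK'd : Differentiable ℝ (fderiv ℝ K) := hK'.differentiable (by norm_num)
  have hH : ContDiff ℝ 1 H := hK'.fderiv_right (by norm_num)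
  have hHc : Continuous H := hH.continuous
  have hsymm : ∀ p : E × F, ∀ v w, H p v w = H p w v := fun p v w =>
    (hK.contDiffAt.isSymmSndFDerivAt (by norm_num)).eq v w
  have hmin : ∀ x : E, fderiv ℝ K (x, 0) = 0 := by
    intro x'
    apply IsLocalMin.fderiv_eq_zero
    exact Filter.Eventually.of_forall (fun p => by rw [hK0]; exact hKnn p)
  -- base direction killed at y = 0
  have hbase : ∀ (x : E) (X : E), H (x, (0:F)) (X, (0:F)) = 0 :=
    fun x X => aux_base K hK hKnn hK0 x X
  have hdiag : ∀ (x : E) (X : E) (Y : F),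
      H (x, (0:F)) (X, Y) (X, Y) = H (x, (0:F)) ((0:E), Y) ((0:E), Y) := by
    intro x X Y
    have hv : ((X, Y) : E × F) = (X, (0:F)) + ((0:E), Y) := by simp
    have hz : ∀ w : E × F, H (x, (0:F)) (X, (0:F)) w = 0 := by
      intro w; rw [hbase]; simp
    have hz2 : H (x, (0:F)) ((0:E), Y) (X, (0:F)) = 0 := by
      rw [hsymm]; exact hz _
    rw [hv, map_add]
    simp only [ContinuousLinearMap.add_apply, map_add, hz, hz2]
    ring
  -- uniform positive-definiteness constant c
  obtain ⟨c, hc0, hc⟩ : ∃ c > (0:ℝ), ∀ x ∈ Q, ∀ Y : F,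
      c * ‖Y‖ ^ 2 ≤ H (x, 0) ((0:E), Y) ((0:E), Y) := by
    by_cases hex : ∃ Y : F, Y ≠ 0
    · obtain ⟨Y₀, hY₀⟩ := hex
      have hT : IsCompact (Q ×ˢ Metric.sphere (0:F) 1) :=
        hQ.prod (isCompact_sphere 0 1)
      have hTne : (Q ×ˢ Metric.sphere (0:F) 1).Nonempty := by
        obtain ⟨x₀, hx₀⟩ := hQne
        refine ⟨(x₀, ‖Y₀‖⁻¹ • Y₀), hx₀, ?_⟩
        simp [norm_smul, inv_mul_cancel₀ (norm_ne_zero_iff.2 hY₀)]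
      have hφc : Continuous (fun p : E × F => H (p.1, 0) ((0:E), p.2) ((0:E), p.2)) := by
        have h1 : Continuous (fun p : E × F => H (p.1, 0)) :=
          hHc.comp (continuous_fst.prodMk continuous_const)
        have h2 : Continuous (fun p : E × F => H (p.1, 0) ((0:E), p.2)) :=
          h1.clm_apply (continuous_const.prodMk continuous_snd)
        exact h2.clm_apply (continuous_const.prodMk continuous_snd)
      obtain ⟨p₀, hp₀, hminp⟩ := hT.exists_isMinOn hTne hφc.continuousOn
      have hp₀Q : p₀.1 ∈ Q := hp₀.1
      have hp₀s : ‖p₀.2‖ = 1 := by simpa using hp₀.2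
      have hp₀ne : p₀.2 ≠ 0 := by
        intro h; rw [h] at hp₀s; simp at hp₀s
      have hcpos : 0 < H (p₀.1, 0) ((0:E), p₀.2) ((0:E), p₀.2) := by
        have := hHess p₀.1 p₀.2 hp₀ne
        rwa [aux_partial K hK p₀.1 p₀.2] at this
      refine ⟨_, hcpos, ?_⟩
      intro x hx Y
      rcases eq_or_ne Y 0 with rfl | hY
      · simp [Prod.mk_zero_zero]
      · have hYn : ‖Y‖ ≠ 0 := norm_ne_zero_iff.2 hY
        have hu : (‖Y‖⁻¹ • Y : F) ∈ Metric.sphere (0:F) 1 := by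
          simp [norm_smul, inv_mul_cancel₀ hYn]
        have hle := isMinOn_iff.1 hminp (x, ‖Y‖⁻¹ • Y) ⟨hx, hu⟩
        have hscale : H (x, 0) ((0:E), Y) ((0:E), Y)
            = ‖Y‖ ^ 2 * H (x, 0) ((0:E), ‖Y‖⁻¹ • Y) ((0:E), ‖Y‖⁻¹ • Y) := by
          have hv : (((0:E), Y) : E × F) = ‖Y‖ • (((0:E), ‖Y‖⁻¹ • Y) : E × F) := by
            rw [Prod.smul_mk, smul_smul, mul_inv_cancel₀ hYn, one_smul, smul_zero]
          rw [hv]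
          simp only [map_smul, ContinuousLinearMap.smul_apply, smul_eq_mul]
          ring
        rw [hscale]
        calc H (p₀.1, 0) ((0:E), p₀.2) ((0:E), p₀.2) * ‖Y‖ ^ 2
            ≤ H (x, 0) ((0:E), ‖Y‖⁻¹ • Y) ((0:E), ‖Y‖⁻¹ • Y) * ‖Y‖ ^ 2 :=
              mul_le_mul_of_nonneg_right hle (sq_nonneg _)
          _ = ‖Y‖ ^ 2 * H (x, 0) ((0:E), ‖Y‖⁻¹ • Y) ((0:E), ‖Y‖⁻¹ • Y) := by ring
    · refine ⟨1, one_pos, ?_⟩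
      intro x hx Y
      have : Y = 0 := by by_contra h; exact hex ⟨Y, h⟩
      simp [this, Prod.mk_zero_zero]
  -- sup of the derivative of H on a compact slab
  have hS : IsCompact (Q ×ˢ Metric.closedBall (0:F) 1) :=
    hQ.prod (isCompact_closedBall 0 1)
  have hSne : (Q ×ˢ Metric.closedBall (0:F) 1).Nonempty := by
    obtain ⟨x₀, hx₀⟩ := hQne
    exact ⟨(x₀, 0), hx₀, Metric.mem_closedBall_self zero_le_one⟩
  letI : NormedAddCommGroup (E × F →L[ℝ] E × F →L[ℝ] ℝ) := inferInstance
  letI : NormedSpace ℝ (E × F →L[ℝ] E × F →L[ℝ] ℝ) := inferInstance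
  have hH'c : Continuous fun p : E × F => ‖fderiv ℝ H p‖ :=
    (hH.continuous_fderiv one_ne_zero).norm
  obtain ⟨M, hM0, hMb⟩ : ∃ M : ℝ, 0 ≤ M ∧
      ∀ p ∈ Q ×ˢ Metric.closedBall (0:F) 1, ‖fderiv ℝ H p‖ ≤ M := by
    obtain ⟨pM, hpM, hmaxp⟩ := hS.exists_isMaxOn hSne hH'c.continuousOn
    exact ⟨‖fderiv ℝ H pM‖, norm_nonneg _, fun p hp => isMaxOn_iff.1 hmaxp p hp⟩
  have hHd : Differentiable ℝ H := hH.differentiable one_ne_zero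
  have hLip : ∀ x ∈ Q, ∀ y : F, ‖y‖ ≤ 1 → ‖H (x, y) - H (x, 0)‖ ≤ M * ‖y‖ := by
    intro x hx y hy
    have hconv : Convex ℝ (({x} : Set E) ×ˢ Metric.closedBall (0:F) 1) :=
      (convex_singleton x).prod (convex_closedBall 0 1)
    have hsub : (({x} : Set E) ×ˢ Metric.closedBall (0:F) 1)
        ⊆ Q ×ˢ Metric.closedBall (0:F) 1 :=
      Set.prod_mono (Set.singleton_subset_iff.2 hx) subset_rfl
    have hmem1 : ((x, (0:F)) : E × F) ∈ ({x} : Set E) ×ˢ Metric.closedBall (0:F) 1 :=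
      ⟨rfl, Metric.mem_closedBall_self zero_le_one⟩
    have hmem2 : ((x, y) : E × F) ∈ ({x} : Set E) ×ˢ Metric.closedBall (0:F) 1 :=
      ⟨rfl, by simpa [Metric.mem_closedBall, dist_zero_right] using hy⟩
    have hmvt := Convex.norm_image_sub_le_of_norm_fderiv_le (f := H)
      (s := ({x} : Set E) ×ˢ Metric.closedBall (0:F) 1)
      (fun p _ => hHd p) (fun p hp => hMb p (hsub hp)) hconv hmem1 hmem2
    have hnorm : ‖((x, y) : E × F) - (x, 0)‖ = ‖y‖ := by
      have h1 : ((x, y) : E × F) - (x, 0) = ((0 : E), y) := by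
        simp [Prod.mk_sub_mk]
      rw [h1, Prod.norm_def]
      simp [max_eq_right (norm_nonneg y)]
    rwa [hnorm] at hmvt
  -- quadratic perturbation bound
  have hpert : ∀ x ∈ Q, ∀ y : F, ‖y‖ ≤ 1 → ∀ v : E × F,
      |H (x, y) v v - H (x, 0) v v| ≤ M * ‖y‖ * ‖v‖ ^ 2 := by
    intro x hx y hy v
    have h1 : H (x, y) v v - H (x, 0) v v = (H (x, y) - H (x, 0)) v v := by
      simp [ContinuousLinearMap.sub_apply]
    rw [h1]
    calc |((H (x, y) - H (x, 0)) v) v| ≤ ‖(H (x, y) - H (x, 0)) v‖ * ‖v‖ := by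
          rw [← Real.norm_eq_abs]; exact ((H (x, y) - H (x, 0)) v).le_opNorm v
      _ ≤ (‖H (x, y) - H (x, 0)‖ * ‖v‖) * ‖v‖ :=
          mul_le_mul_of_nonneg_right ((H (x, y) - H (x, 0)).le_opNorm v) (norm_nonneg _)
      _ ≤ ((M * ‖y‖) * ‖v‖) * ‖v‖ := by
          have h2 : ‖H (x, y) - H (x, 0)‖ * ‖v‖ ≤ M * ‖y‖ * ‖v‖ :=
            mul_le_mul_of_nonneg_right (hLip x hx y hy) (norm_nonneg _)
          exact mul_le_mul_of_nonneg_right h2 (norm_nonneg _)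
      _ = M * ‖y‖ * ‖v‖ ^ 2 := by ring
  set δ : ℝ := min 1 (c / (2 * (M + 1))) with hδdef
  have hM1 : (0:ℝ) < M + 1 := by linarith
  have hδ0 : 0 < δ := lt_min one_pos (by positivity)
  have hMδ : M * δ ≤ c / 2 := by
    have h1 : M * δ ≤ M * (c / (2 * (M + 1))) :=
      mul_le_mul_of_nonneg_left (min_le_right _ _) hM0
    have h2 : M * (c / (2 * (M + 1))) = c / 2 * (M / (M + 1)) := by
      field_simp
    have h3 : M / (M + 1) ≤ 1 := by rw [div_le_one hM1]; linarith
    nlinarith [hc0.le]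
  -- lower bound on K via the 1-dim Taylor argument
  have hKlow : ∀ x ∈ Q, ∀ y : F, ‖y‖ ≤ δ → (c / 2 * ‖y‖ ^ 2) / 2 ≤ K (x, y) := by
    intro x hx y hy
    have hline : ∀ t : ℝ, HasDerivAt (fun t : ℝ => ((x, t • y) : E × F)) (((0:E), y)) t := by
      intro t
      have h1 : HasDerivAt (fun t : ℝ => t • y) y t := by
        simpa using (hasDerivAt_id t).smul_const y
      exact (hasDerivAt_const t x).prodMk h1
    have hg : ∀ t ∈ Set.Icc (0:ℝ) 1, HasDerivAt (fun t : ℝ => K (x, t • y))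
        (fderiv ℝ K (x, t • y) ((0:E), y)) t := fun t _ =>
      (hKd (x, t • y)).hasFDerivAt.comp_hasDerivAt t (hline t)
    have hg' : ∀ t ∈ Set.Icc (0:ℝ) 1,
        HasDerivAt (fun t : ℝ => fderiv ℝ K (x, t • y) ((0:E), y))
          (H (x, t • y) ((0:E), y) ((0:E), y)) t := by
      intro t _
      have h2 : HasFDerivAt (fun p : E × F => fderiv ℝ K p ((0:E), y))
          ((ContinuousLinearMap.apply ℝ ℝ (((0:E), y) : E × F)).comp (H (x, t • y)))
          (x, t • y) :=
        ((ContinuousLinearMap.apply ℝ ℝ (((0:E), y) : E × F)).hasFDerivAt).comp _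
          (hK'd (x, t • y)).hasFDerivAt
      have h3 := h2.comp_hasDerivAt t (hline t)
      exact h3
    have hA : ∀ t ∈ Set.Icc (0:ℝ) 1,
        c / 2 * ‖y‖ ^ 2 ≤ H (x, t • y) ((0:E), y) ((0:E), y) := by
      intro t ht
      have hty : ‖t • y‖ ≤ ‖y‖ := by
        rw [norm_smul, Real.norm_eq_abs, abs_of_nonneg ht.1]
        nlinarith [norm_nonneg y, ht.2]
      have hty1 : ‖t • y‖ ≤ 1 := le_trans hty (le_trans hy (min_le_left _ _))
      have hp := hpert x hx (t • y) hty1 (((0:E), y) : E × F)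
      have hv : ‖(((0:E), y) : E × F)‖ = ‖y‖ := by
        rw [Prod.norm_def]; simp [max_eq_right (norm_nonneg y)]
      rw [hv] at hp
      have hMy : M * ‖t • y‖ ≤ c / 2 := by
        have := mul_le_mul_of_nonneg_left (le_trans hty hy) hM0
        linarith
      nlinarith [(abs_le.1 hp).1, hc x hx y, sq_nonneg ‖y‖, norm_nonneg (t • y), hM0]
    have h0 : K (x, (0:ℝ) • y) = 0 := by rw [zero_smul]; exact hK0 x
    have h0' : fderiv ℝ K (x, (0:ℝ) • y) ((0:E), y) = 0 := by
      rw [zero_smul, hmin]; simp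
    have := aux_1d hg hg' hA h0 h0'
    simpa using this
  -- final assembly
  have hs40 : (0:ℝ) < Real.sqrt (c / 4) := Real.sqrt_pos.2 (by positivity)
  refine ⟨c / 2, by positivity, M / Real.sqrt (c / 4), by positivity, δ, hδ0, ?_⟩
  intro x hx y hy X Y
  have hy1 : ‖y‖ ≤ 1 := le_trans hy (min_le_left _ _)
  have hp := hpert x hx y hy1 ((X, Y) : E × F)
  have h0 : H (x, 0) (X, Y) (X, Y) = H (x, 0) ((0:E), Y) ((0:E), Y) := hdiag x X Y
  have hcY := hc x hx Y
  have hv2 : ‖((X, Y) : E × F)‖ ^ 2 ≤ ‖X‖ ^ 2 + ‖Y‖ ^ 2 := by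
    have h1 : ‖((X, Y) : E × F)‖ = max ‖X‖ ‖Y‖ := Prod.norm_def _
    rcases le_total ‖X‖ ‖Y‖ with h | h
    · rw [h1, max_eq_right h]; nlinarith [sq_nonneg ‖X‖]
    · rw [h1, max_eq_left h]; nlinarith [sq_nonneg ‖Y‖]
  have hKl := hKlow x hx y hy
  have hsq : Real.sqrt (c / 4) * ‖y‖ ≤ Real.sqrt (K (x, y)) := by
    have h1 : Real.sqrt (c / 4 * ‖y‖ ^ 2) ≤ Real.sqrt (K (x, y)) :=
      Real.sqrt_le_sqrt (by linarith)
    rwa [Real.sqrt_mul (by positivity), Real.sqrt_sq (norm_nonneg y)] at h1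
  have hb : M * ‖y‖ ≤ M / Real.sqrt (c / 4) * Real.sqrt (K (x, y)) := by
    rw [div_mul_eq_mul_div, le_div_iff₀ hs40]
    calc M * ‖y‖ * Real.sqrt (c / 4) = M * (Real.sqrt (c / 4) * ‖y‖) := by ring
      _ ≤ M * Real.sqrt (K (x, y)) := mul_le_mul_of_nonneg_left hsq hM0
  have hMy : M * ‖y‖ ≤ c / 2 := by
    have := mul_le_mul_of_nonneg_left hy hM0
    linarith
  have t1 : M * ‖y‖ * ‖((X, Y) : E × F)‖ ^ 2 ≤ M * ‖y‖ * (‖X‖ ^ 2 + ‖Y‖ ^ 2) :=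
    mul_le_mul_of_nonneg_left hv2 (by positivity)
  have t2 : M * ‖y‖ * ‖Y‖ ^ 2 ≤ c / 2 * ‖Y‖ ^ 2 :=
    mul_le_mul_of_nonneg_right hMy (sq_nonneg _)
  have t3 : M * ‖y‖ * ‖X‖ ^ 2 ≤ (M / Real.sqrt (c / 4) * Real.sqrt (K (x, y))) * ‖X‖ ^ 2 :=
    mul_le_mul_of_nonneg_right hb (sq_nonneg _)
  have hp' := (abs_le.1 hp).1
  rw [h0] at hp'
  nlinarith [hcY, t1, t2, t3, hp']

/-- Hessian lower bound near a Morse–Bott nondegenerate symplectic minimum, in a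
product (Darboux) chart `ℝ^{2m} × ℝ^{2k}`: if `K ≥ 0` is `C³`, vanishes along
`{y = 0}`, and the normal Hessian `d²_y K(x, 0)` is positive definite for every
`x`, then on every compact set `Q` of base points there are constants `a > 0`,
`b ≥ 0`, `δ > 0` such that for `x ∈ Q`, `‖y‖ ≤ δ` and all `(X, Y)`,
`d²K_{(x,y)}((X,Y),(X,Y)) ≥ a‖Y‖² − b·r·‖X‖²` with `r = √(K(x,y))`. -/
theorem stmt3 (m k : ℕ)
    (K : EuclideanSpace ℝ (Fin (2 * m)) × EuclideanSpace ℝ (Fin (2 * k)) → ℝ)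
    (hK : ContDiff ℝ 3 K)
    (hKnn : ∀ p, 0 ≤ K p)
    (hK0 : ∀ x : EuclideanSpace ℝ (Fin (2 * m)), K (x, 0) = 0)
    (hHess : ∀ x : EuclideanSpace ℝ (Fin (2 * m)),
      ∀ Y : EuclideanSpace ℝ (Fin (2 * k)), Y ≠ 0 →
        0 < fderiv ℝ (fderiv ℝ (fun y => K (x, y))) 0 Y Y)
    (Q : Set (EuclideanSpace ℝ (Fin (2 * m)))) (hQ : IsCompact Q) :
    ∃ a > (0 : ℝ), ∃ b ≥ (0 : ℝ), ∃ δ > (0 : ℝ),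
      ∀ x ∈ Q, ∀ y : EuclideanSpace ℝ (Fin (2 * k)), ‖y‖ ≤ δ →
        ∀ (X : EuclideanSpace ℝ (Fin (2 * m))) (Y : EuclideanSpace ℝ (Fin (2 * k))),
          a * ‖Y‖ ^ 2 - b * Real.sqrt (K (x, y)) * ‖X‖ ^ 2 ≤
            fderiv ℝ (fderiv ℝ K) (x, y) (X, Y) (X, Y) :=
  aux_main K hK hKnn hK0 hHess Q hQ
end

section
/- Let H₀, H₁ : ℝ → Sym(2n,ℝ) be continuous families of symmetric matrices such that H₁(t) − H₀(t) is positive definite for every t. For s ∈ [0,1] set H_s(t) = (1−s)H₀(t) + sH₁(t), and let Φ_s(t) be the solution of ∂_t Φ_s(t) = J H_s(t) Φ_s(t) with a fixed initial condition Φ_s(0) = Φ₀ ∈ Sp(2n,ℝ) independent of s (so Φ_s(t) is C¹ in (s,t)). Then for every s ∈ [0,1] and every t > 0 the matrix K_s(t) := −J (∂_s Φ_s(t)) Φ_s(t)⁻¹ is symmetric and positive definite. (This is the key positivity claim, K_s(t) > 0 for all s ∈ [0,1] and t > 0, established in the proof of the symplectic Sturm comparison theorem, Proposition 2.2.) -/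
open Matrix Topology Filter

attribute [local instance] Matrix.normedAddCommGroup Matrix.normedSpace

section Helpers
set_option linter.unusedSectionVars false
variable {ι : Type*} [Fintype ι] [DecidableEq ι]

private lemma hdw_entry {A : ℝ → Matrix ι ι ℝ} {A' : Matrix ι ι ℝ} {S : Set ℝ} {τ : ℝ}
    (hA : HasDerivWithinAt A A' S τ) (i j : ι) :
    HasDerivWithinAt (fun u => A u i j) (A' i j) S τ :=
  hasDerivWithinAt_pi.1 (hasDerivWithinAt_pi.1 hA i) j

private lemma hdw_matrix_mul {A B : ℝ → Matrix ι ι ℝ} {A' B' : Matrix ι ι ℝ} {S : Set ℝ} {τ : ℝ}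
    (hA : HasDerivWithinAt A A' S τ) (hB : HasDerivWithinAt B B' S τ) :
    HasDerivWithinAt (fun u => A u * B u) (A' * B τ + A τ * B') S τ := by
  refine hasDerivWithinAt_pi.2 fun i => ?_
  refine hasDerivWithinAt_pi.2 fun j => ?_
  have : ∀ u, (A u * B u) i j = ∑ k, A u i k * B u k j := fun u => Matrix.mul_apply
  simp only [this]
  have h : HasDerivWithinAt (fun u => ∑ k, A u i k * B u k j)
      (∑ k, (A' i k * B τ k j + A τ i k * B' k j)) S τ :=
    HasDerivWithinAt.fun_sum (fun k _ => (hdw_entry hA i k).mul (hdw_entry hB k j))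
  exact h.congr_deriv (by simp [Matrix.mul_apply, Matrix.add_apply, Finset.sum_add_distrib])

private lemma hdw_transpose {A : ℝ → Matrix ι ι ℝ} {A' : Matrix ι ι ℝ} {S : Set ℝ} {τ : ℝ}
    (hA : HasDerivWithinAt A A' S τ) :
    HasDerivWithinAt (fun u => (A u)ᵀ) A'ᵀ S τ := by
  refine hasDerivWithinAt_pi.2 fun i => ?_
  refine hasDerivWithinAt_pi.2 fun j => ?_
  exact hdw_entry hA j i

private lemma hdw_quad {A : ℝ → Matrix ι ι ℝ} {A' : Matrix ι ι ℝ} {S : Set ℝ} {τ : ℝ}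
    (x : ι → ℝ) (hA : HasDerivWithinAt A A' S τ) :
    HasDerivWithinAt (fun u => x ⬝ᵥ (A u *ᵥ x)) (x ⬝ᵥ (A' *ᵥ x)) S τ := by
  have : ∀ u, x ⬝ᵥ (A u *ᵥ x) = ∑ i, ∑ j, x i * (A u i j * x j) := by
    intro u; simp [dotProduct, Matrix.mulVec, Finset.mul_sum]
  simp only [this]
  have h : HasDerivWithinAt (fun u => ∑ i, ∑ j, x i * (A u i j * x j))
      (∑ i, ∑ j, x i * (A' i j * x j)) S τ :=
    HasDerivWithinAt.fun_sum fun i _ => HasDerivWithinAt.fun_sum fun j _ =>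
      ((hdw_entry hA i j).mul_const (x j)).const_mul (x i)
  convert h using 1
  simp [dotProduct, Matrix.mulVec, Finset.mul_sum]

private lemma hda_matrix_mul {A B : ℝ → Matrix ι ι ℝ} {A' B' : Matrix ι ι ℝ} {τ : ℝ}
    (hA : HasDerivAt A A' τ) (hB : HasDerivAt B B' τ) :
    HasDerivAt (fun u => A u * B u) (A' * B τ + A τ * B') τ := by
  exact (hdw_matrix_mul hA.hasDerivWithinAt hB.hasDerivWithinAt).hasDerivAt Filter.univ_mem

private lemma hda_transpose {A : ℝ → Matrix ι ι ℝ} {A' : Matrix ι ι ℝ} {τ : ℝ}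
    (hA : HasDerivAt A A' τ) :
    HasDerivAt (fun u => (A u)ᵀ) A'ᵀ τ := by
  exact (hdw_transpose hA.hasDerivWithinAt).hasDerivAt Filter.univ_mem

private lemma hda_quad {A : ℝ → Matrix ι ι ℝ} {A' : Matrix ι ι ℝ} {τ : ℝ}
    (x : ι → ℝ) (hA : HasDerivAt A A' τ) :
    HasDerivAt (fun u => x ⬝ᵥ (A u *ᵥ x)) (x ⬝ᵥ (A' *ᵥ x)) τ := by
  rw [← hasDerivWithinAt_univ] at *
  exact hdw_quad x hA.hasDerivWithinAt

private lemma alg2 (J Ha Hb P Q : Matrix ι ι ℝ) (hJT : Jᵀ = -J) (hJJ : J * J = -1)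
    (hHa : Haᵀ = Ha) :
    ((J * Ha * P)ᵀ * J + Pᵀ * 0) * Q + Pᵀ * J * (J * Hb * Q) = Pᵀ * (Ha - Hb) * Q := by
  have e : ∀ Z : Matrix ι ι ℝ, J * (J * Z) = -Z := fun Z => by
    rw [← Matrix.mul_assoc, hJJ]; simp
  simp only [Matrix.transpose_mul, hJT, hHa, Matrix.mul_zero, add_zero, Matrix.mul_neg,
    Matrix.neg_mul, Matrix.mul_assoc, e, Matrix.sub_mul, Matrix.mul_sub, neg_neg]
  abel

private lemma alg1 (J H P : Matrix ι ι ℝ) (hJT : Jᵀ = -J) (hJJ : J * J = -1) (hH : Hᵀ = H) :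
    ((J * H * P)ᵀ * J + Pᵀ * 0) * P + Pᵀ * J * (J * H * P) = 0 := by
  rw [alg2 J H H P P hJT hJJ hH]; simp

private lemma contOn_entry {X : Type*} [TopologicalSpace X]
    {F : X → Matrix ι ι ℝ} {S : Set X} (hF : ContinuousOn F S) (i j : ι) :
    ContinuousOn (fun p => F p i j) S :=
  (continuous_apply_apply i j).comp_continuousOn hF

private lemma contOn_quadform {X : Type*} [TopologicalSpace X]
    {F M F' : X → Matrix ι ι ℝ} {S : Set X} (x : ι → ℝ)
    (hF : ContinuousOn F S) (hM : ContinuousOn M S) (hF' : ContinuousOn F' S) :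
    ContinuousOn (fun p => (F p *ᵥ x) ⬝ᵥ (M p *ᵥ (F' p *ᵥ x))) S := by
  have hv : ∀ (G : X → Matrix ι ι ℝ), ContinuousOn G S → ∀ k,
      ContinuousOn (fun p => (G p *ᵥ x) k) S := by
    intro G hG k
    simp only [Matrix.mulVec, dotProduct]
    exact continuousOn_finset_sum _ fun j _ => (contOn_entry hG k j).mul continuousOn_const
  have hw : ∀ k, ContinuousOn (fun p => (M p *ᵥ (F' p *ᵥ x)) k) S := by
    intro k
    simp only [Matrix.mulVec, dotProduct]
    exact continuousOn_finset_sum _ fun j _ => (contOn_entry hM k j).mul (hv F' hF' j)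
  simp only [dotProduct]
  exact continuousOn_finset_sum _ fun k _ => (hv F hF k).mul (hw k)

end Helpers

/-- Positivity in the symplectic Sturm comparison theorem: if `H₁(t) − H₀(t)` is
positive definite for all `t`, `H_s = (1−s)H₀ + sH₁`, and `Φ_s(t)` solves
`∂_t Φ_s = J H_s(t) Φ_s` with a fixed symplectic initial condition
`Φ_s(0) = Φ₀` independent of `s` (the family being `C¹` in `(s, t)`), then for
every `s ∈ [0,1]` and `t > 0` the matrix `K_s(t) = −J (∂_s Φ_s(t)) Φ_s(t)⁻¹`
is symmetric and positive definite. -/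
theorem stmt5 (n : ℕ)
    (H₀ H₁ : ℝ → Matrix (Fin n ⊕ Fin n) (Fin n ⊕ Fin n) ℝ)
    (hH₀c : Continuous H₀) (hH₁c : Continuous H₁)
    (hH₀symm : ∀ t : ℝ, (H₀ t)ᵀ = H₀ t) (hH₁symm : ∀ t : ℝ, (H₁ t)ᵀ = H₁ t)
    (hpos : ∀ t : ℝ, (H₁ t - H₀ t).PosDef)
    (Φ₀ : Matrix (Fin n ⊕ Fin n) (Fin n ⊕ Fin n) ℝ)
    (hΦ₀ : Φ₀ᵀ * Matrix.J (Fin n) ℝ * Φ₀ = Matrix.J (Fin n) ℝ)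
    (Φ Φs : ℝ → ℝ → Matrix (Fin n ⊕ Fin n) (Fin n ⊕ Fin n) ℝ)
    (hΦc : ContinuousOn (fun p : ℝ × ℝ => Φ p.1 p.2) (Set.Icc 0 1 ×ˢ Set.univ))
    (hΦsc : ContinuousOn (fun p : ℝ × ℝ => Φs p.1 p.2) (Set.Icc 0 1 ×ˢ Set.univ))
    (hODE : ∀ s ∈ Set.Icc (0 : ℝ) 1, ∀ t : ℝ,
      HasDerivAt (fun t' => Φ s t')
        (Matrix.J (Fin n) ℝ * ((1 - s) • H₀ t + s • H₁ t) * Φ s t) t)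
    (hinit : ∀ s ∈ Set.Icc (0 : ℝ) 1, Φ s 0 = Φ₀)
    (hds : ∀ s ∈ Set.Icc (0 : ℝ) 1, ∀ t : ℝ,
      HasDerivWithinAt (fun s' => Φ s' t) (Φs s t) (Set.Icc 0 1) s) :
    ∀ s ∈ Set.Icc (0 : ℝ) 1, ∀ t : ℝ, 0 < t →
      (-(Matrix.J (Fin n) ℝ) * Φs s t * (Φ s t)⁻¹).PosDef := by
  set Jm : Matrix (Fin n ⊕ Fin n) (Fin n ⊕ Fin n) ℝ := Matrix.J (Fin n) ℝ with hJmdef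
  have hJT : Jmᵀ = -Jm := Matrix.J_transpose (Fin n) ℝ
  have hJJ : Jm * Jm = -1 := Matrix.J_squared (Fin n) ℝ
  -- symmetry of the Hamiltonians
  have hHsym : ∀ σ τ : ℝ, ((1 - σ) • H₀ τ + σ • H₁ τ)ᵀ = (1 - σ) • H₀ τ + σ • H₁ τ := by
    intro σ τ
    simp [Matrix.transpose_add, Matrix.transpose_smul, hH₀symm, hH₁symm]
  -- Step 1: symplecticity
  have symp : ∀ σ ∈ Set.Icc (0 : ℝ) 1, ∀ τ : ℝ, (Φ σ τ)ᵀ * Jm * Φ σ τ = Jm := by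
    intro σ hσ τ
    have key : ∀ u : ℝ, HasDerivAt (fun τ' => (Φ σ τ')ᵀ * Jm * Φ σ τ') 0 u := by
      intro u
      have hd := hODE σ hσ u
      have h1 := hda_matrix_mul (hda_matrix_mul (hda_transpose hd) (hasDerivAt_const u Jm)) hd
      have := alg1 Jm ((1 - σ) • H₀ u + σ • H₁ u) (Φ σ u) hJT hJJ (hHsym σ u)
      rw [this] at h1
      exact h1
    have hconst := is_const_of_deriv_eq_zero
      (fun u => (key u).differentiableAt) (fun u => (key u).deriv) τ 0
    rw [hconst, hinit σ hσ, hΦ₀]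
  -- Step 2: invertibility
  have hleft : ∀ σ ∈ Set.Icc (0 : ℝ) 1, ∀ τ : ℝ, (-Jm * (Φ σ τ)ᵀ * Jm) * Φ σ τ = 1 := by
    intro σ hσ τ
    calc (-Jm * (Φ σ τ)ᵀ * Jm) * Φ σ τ = -Jm * ((Φ σ τ)ᵀ * Jm * Φ σ τ) := by
          simp only [Matrix.mul_assoc, Matrix.neg_mul]
      _ = 1 := by rw [symp σ hσ τ, Matrix.neg_mul, hJJ]; simp
  have hmv : ∀ σ ∈ Set.Icc (0 : ℝ) 1, ∀ τ : ℝ, ∀ v : (Fin n ⊕ Fin n) → ℝ,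
      v ≠ 0 → Φ σ τ *ᵥ v ≠ 0 := by
    intro σ hσ τ v hv hzero
    apply hv
    have : (-Jm * (Φ σ τ)ᵀ * Jm) *ᵥ (Φ σ τ *ᵥ v) = v := by
      rw [Matrix.mulVec_mulVec, hleft σ hσ τ, Matrix.one_mulVec]
    rw [hzero, Matrix.mulVec_zero] at this
    exact this.symm
  intro s hs t ht
  -- Step 3: the key quadratic estimate
  have key : ∀ x : (Fin n ⊕ Fin n) → ℝ, x ≠ 0 →
      x ⬝ᵥ (((Φ s t)ᵀ * Jm * Φs s t) *ᵥ x) < 0 := by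
    intro x hx
    set A : Set (ℝ × ℝ) := Set.Icc (0 : ℝ) 1 ×ˢ Set.Icc 0 t with hAdef
    set G : ℝ × ℝ → ℝ :=
      fun p => (Φ s p.2 *ᵥ x) ⬝ᵥ ((H₁ p.2 - H₀ p.2) *ᵥ (Φ p.1 p.2 *ᵥ x)) with hGdef
    have hGc : ContinuousOn G A := by
      apply contOn_quadform x
      · exact hΦc.comp (continuous_const.prodMk continuous_snd).continuousOn
          (fun p _ => ⟨hs, Set.mem_univ _⟩)
      · exact ((hH₁c.comp continuous_snd).sub (hH₀c.comp continuous_snd)).continuousOn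
      · exact hΦc.mono (Set.prod_mono_right (Set.subset_univ _))
    have hGdiag : ∀ τ : ℝ, 0 < G (s, τ) := by
      intro τ
      have hv : Φ s τ *ᵥ x ≠ 0 := hmv s hs τ x hx
      have h := (hpos τ).dotProduct_mulVec_pos hv
      simpa [hGdef] using h
    -- minimum over the diagonal
    have hGsc : ContinuousOn (fun τ => G (s, τ)) (Set.Icc 0 t) :=
      hGc.comp (continuous_const.prodMk continuous_id).continuousOn
        (fun τ hτ => ⟨hs, hτ⟩)
    obtain ⟨τ₀, hτ₀, hmin⟩ :=
      isCompact_Icc.exists_isMinOn ⟨0, Set.left_mem_Icc.2 ht.le⟩ hGsc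
    set c := G (s, τ₀) with hcdef
    have hcpos : 0 < c := hGdiag τ₀
    -- uniform bound near s
    have hδ : ∃ δ > 0, ∀ p ∈ A, |p.1 - s| < δ → c / 2 < G p := by
      set B := {p ∈ A | G p ≤ c / 2} with hBdef
      have hAclosed : IsClosed A := isClosed_Icc.prod isClosed_Icc
      have hAcomp : IsCompact A := isCompact_Icc.prod isCompact_Icc
      have hBclosed : IsClosed B := by
        have h := hGc.preimage_isClosed_of_isClosed hAclosed isClosed_Iic
          (t := Set.Iic (c / 2))
        have he : B = A ∩ G ⁻¹' Set.Iic (c / 2) := by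
          ext p; simp [hBdef]
        rw [he]; exact h
      have hBcomp : IsCompact B := hAcomp.of_isClosed_subset hBclosed
        (fun p hp => hp.1)
      by_cases hB : B.Nonempty
      · obtain ⟨p₀, hp₀, hminB⟩ := hBcomp.exists_isMinOn hB
          ((continuous_fst.sub continuous_const).abs.continuousOn)
        refine ⟨|p₀.1 - s|, ?_, ?_⟩
        · rcases (abs_nonneg (p₀.1 - s)).lt_or_eq with h | h
          · exact h
          · exfalso
            have hp1 : p₀.1 = s := by
              have := abs_eq_zero.1 h.symm; linarith [sub_eq_zero.1 this]
            have hp2 : p₀.2 ∈ Set.Icc 0 t := hp₀.1.2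
            have h1 : c ≤ G (s, p₀.2) := hmin hp2
            have h2 : G p₀ ≤ c / 2 := hp₀.2
            rw [show (s, p₀.2) = p₀ by rw [← hp1]] at h1
            linarith
        · intro p hp hlt
          by_contra h
          push_neg at h
          exact absurd (hminB (⟨hp, h⟩ : p ∈ B)) (not_le.2 hlt)
      · exact ⟨1, one_pos, fun p hp _ => by
          by_contra h; push_neg at h; exact hB ⟨p, hp, h⟩⟩
    obtain ⟨δ, hδpos, hδb⟩ := hδ
    -- slope bound
    set q : ℝ → ℝ := fun σ => x ⬝ᵥ (((Φ s t)ᵀ * Jm * Φ σ t) *ᵥ x) with hqdef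
    have hq0 : q s = x ⬝ᵥ (Jm *ᵥ x) := by rw [hqdef]; simp only [symp s hs t]
    have slope_bound : ∀ σ ∈ Set.Icc (0 : ℝ) 1, σ ≠ s → |σ - s| < δ →
        (q σ - q s) / (σ - s) ≤ -(c / 2 * t) := by
      intro σ hσ hne hdist
      set f : ℝ → ℝ := fun τ => x ⬝ᵥ (((Φ s τ)ᵀ * Jm * Φ σ τ) *ᵥ x) with hfdef
      have hf' : ∀ τ : ℝ, HasDerivAt f ((s - σ) * G (σ, τ)) τ := by
        intro τ
        have hmat := hda_matrix_mul
          (hda_matrix_mul (hda_transpose (hODE s hs τ)) (hasDerivAt_const τ Jm))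
          (hODE σ hσ τ)
        have halg := alg2 Jm ((1 - s) • H₀ τ + s • H₁ τ) ((1 - σ) • H₀ τ + σ • H₁ τ)
          (Φ s τ) (Φ σ τ) hJT hJJ (hHsym s τ)
        rw [halg] at hmat
        have hq := hda_quad x hmat
        have hdiff : ((1 - s) • H₀ τ + s • H₁ τ) - ((1 - σ) • H₀ τ + σ • H₁ τ)
            = (s - σ) • (H₁ τ - H₀ τ) := by
          module
        rw [hdiff] at hq
        convert hq using 1
        rw [hGdef]
        simp only [Matrix.mul_smul, Matrix.smul_mul, Matrix.smul_mulVec,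
          dotProduct_smul, smul_eq_mul]
        congr 1
        rw [← Matrix.mulVec_mulVec, ← Matrix.mulVec_mulVec,
          Matrix.dotProduct_mulVec x, Matrix.vecMul_transpose]
      have hf0 : f 0 = x ⬝ᵥ (Jm *ᵥ x) := by
        rw [hfdef]; simp only [hinit s hs, hinit σ hσ, hΦ₀]
      have hft : f t = q σ := rfl
      set φ : ℝ → ℝ := fun τ => f τ + ((σ - s) * (c / 2)) * τ with hφdef
      have hφ' : ∀ τ : ℝ, HasDerivAt φ ((s - σ) * G (σ, τ) + (σ - s) * (c / 2)) τ := by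
        intro τ
        have := (hf' τ).add ((hasDerivAt_id τ).const_mul ((σ - s) * (c / 2)))
        exact this.congr_deriv (by simp)
      have hGlb : ∀ τ ∈ Set.Icc (0 : ℝ) t, c / 2 < G (σ, τ) := by
        intro τ hτ
        exact hδb (σ, τ) ⟨hσ, hτ⟩ hdist
      rcases lt_or_gt_of_ne hne with hlt | hgt
      · -- σ < s
        have hmono : MonotoneOn φ (Set.Icc 0 t) := by
          apply monotoneOn_of_deriv_nonneg (convex_Icc 0 t)
          · exact (Differentiable.continuous (fun u => (hφ' u).differentiableAt)).continuousOn
          · exact fun u _ => (hφ' u).differentiableAt.differentiableWithinAt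
          · intro u hu
            rw [interior_Icc] at hu
            rw [(hφ' u).deriv]
            have := hGlb u ⟨hu.1.le, hu.2.le⟩
            nlinarith
        have h01 : (0 : ℝ) ∈ Set.Icc (0 : ℝ) t := Set.left_mem_Icc.2 ht.le
        have ht1 : t ∈ Set.Icc (0 : ℝ) t := Set.right_mem_Icc.2 ht.le
        have := hmono h01 ht1 ht.le
        rw [hφdef] at this
        simp only [mul_zero, add_zero] at this
        -- f 0 ≤ f t + (σ - s)(c/2) t
        rw [div_le_iff_of_neg (by linarith : σ - s < 0)]
        rw [hq0, ← hf0, ← hft]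
        nlinarith
      · -- σ > s
        have hanti : AntitoneOn φ (Set.Icc 0 t) := by
          apply antitoneOn_of_deriv_nonpos (convex_Icc 0 t)
          · exact (Differentiable.continuous (fun u => (hφ' u).differentiableAt)).continuousOn
          · exact fun u _ => (hφ' u).differentiableAt.differentiableWithinAt
          · intro u hu
            rw [interior_Icc] at hu
            rw [(hφ' u).deriv]
            have := hGlb u ⟨hu.1.le, hu.2.le⟩
            nlinarith
        have h01 : (0 : ℝ) ∈ Set.Icc (0 : ℝ) t := Set.left_mem_Icc.2 ht.le
        have ht1 : t ∈ Set.Icc (0 : ℝ) t := Set.right_mem_Icc.2 ht.le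
        have := hanti h01 ht1 ht.le
        rw [hφdef] at this
        simp only [mul_zero, add_zero] at this
        rw [div_le_iff₀ (by linarith : 0 < σ - s)]
        rw [hq0, ← hf0, ← hft]
        nlinarith
    -- the derivative of q within Icc 0 1 at s
    have hqd : HasDerivWithinAt q (x ⬝ᵥ (((Φ s t)ᵀ * Jm * Φs s t) *ᵥ x))
        (Set.Icc 0 1) s := by
      have hm := hdw_matrix_mul
        (hasDerivWithinAt_const s (Set.Icc (0:ℝ) 1) ((Φ s t)ᵀ * Jm)) (hds s hs t)
      simp only [Matrix.zero_mul, zero_add] at hm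
      have := hdw_quad x hm
      rw [Matrix.mul_assoc] at this ⊢
      exact this
    -- pass to the limit
    have hNB : (𝓝[Set.Icc (0 : ℝ) 1 \ {s}] s).NeBot := by
      rcases lt_or_eq_of_le hs.2 with h | h
      · have h1 : Set.Ioo s 1 ⊆ Set.Icc (0 : ℝ) 1 \ {s} := fun u hu =>
          ⟨⟨hs.1.trans hu.1.le, hu.2.le⟩, fun he => absurd he (by simp; linarith [hu.1])⟩
        exact (left_nhdsWithin_Ioo_neBot h).mono (nhdsWithin_mono s h1)
      · have h0 : (0 : ℝ) < s := by rw [h]; norm_num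
        have h1 : Set.Ioo (0 : ℝ) s ⊆ Set.Icc (0 : ℝ) 1 \ {s} := fun u hu =>
          ⟨⟨hu.1.le, hu.2.le.trans h.le⟩, fun he => absurd he (by simp; linarith [hu.2])⟩
        exact (right_nhdsWithin_Ioo_neBot h0).mono (nhdsWithin_mono s h1)
    rw [hasDerivWithinAt_iff_tendsto_slope] at hqd
    have hev : ∀ᶠ σ in 𝓝[Set.Icc (0 : ℝ) 1 \ {s}] s, slope q s σ ≤ -(c / 2 * t) := by
      have h1 : ∀ᶠ σ in 𝓝[Set.Icc (0 : ℝ) 1 \ {s}] s, |σ - s| < δ := by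
        apply Filter.Eventually.filter_mono nhdsWithin_le_nhds
        have : Metric.ball s δ ∈ 𝓝 s := Metric.ball_mem_nhds s hδpos
        filter_upwards [this] with σ hσ
        rw [Metric.mem_ball, Real.dist_eq] at hσ
        exact hσ
      filter_upwards [h1, self_mem_nhdsWithin] with σ hσ1 hσ2
      rw [slope_def_field]
      have := slope_bound σ hσ2.1 (fun he => hσ2.2 (by simp [he])) hσ1
      exact this
    have hle := le_of_tendsto hqd hev
    have : 0 < c / 2 * t := by positivity
    linarith
  -- Step 4: assemble
  have hsymm2 : (Φs s t)ᵀ * Jm * Φ s t + (Φ s t)ᵀ * Jm * Φs s t = 0 := by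
    have h1 := hdw_matrix_mul
      (hdw_matrix_mul (hdw_transpose (hds s hs t))
        (hasDerivWithinAt_const s (Set.Icc (0:ℝ) 1) Jm))
      (hds s hs t)
    have h2 : HasDerivWithinAt (fun σ => (Φ σ t)ᵀ * Jm * Φ σ t) 0 (Set.Icc 0 1) s :=
      (hasDerivWithinAt_const s (Set.Icc (0:ℝ) 1) Jm).congr
        (fun σ hσ => symp σ hσ t) (symp s hs t)
    have := (uniqueDiffOn_Icc zero_lt_one s hs).eq_deriv _ h1 h2
    rw [← this]
    simp [Matrix.mul_assoc]
  have hQsymm : ((Φ s t)ᵀ * Jm * Φs s t)ᵀ = (Φ s t)ᵀ * Jm * Φs s t := by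
    have h1 : (Φs s t)ᵀ * Jm * Φ s t = -((Φ s t)ᵀ * Jm * Φs s t) :=
      eq_neg_of_add_eq_zero_left hsymm2
    calc ((Φ s t)ᵀ * Jm * Φs s t)ᵀ = (Φs s t)ᵀ * (Jmᵀ * Φ s t) := by
          simp [Matrix.transpose_mul, Matrix.mul_assoc]
      _ = -((Φs s t)ᵀ * Jm * Φ s t) := by
          rw [hJT]; simp [Matrix.mul_assoc]
      _ = (Φ s t)ᵀ * Jm * Φs s t := by rw [h1, neg_neg]
  have hPinv : (Φ s t)⁻¹ = -Jm * (Φ s t)ᵀ * Jm := Matrix.inv_eq_left_inv (hleft s hs t)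
  have hPinvP : (Φ s t)⁻¹ * Φ s t = 1 := by rw [hPinv]; exact hleft s hs t
  have hPPinv : Φ s t * (Φ s t)⁻¹ = 1 := mul_eq_one_comm.1 hPinvP
  -- K = (P⁻¹)ᵀ * (-(Pᵀ Jm Ps)) * P⁻¹
  have hK : -Jm * Φs s t * (Φ s t)⁻¹
      = ((Φ s t)⁻¹)ᵀ * (-((Φ s t)ᵀ * Jm * Φs s t)) * (Φ s t)⁻¹ := by
    have h1 : ((Φ s t)⁻¹)ᵀ * (Φ s t)ᵀ = 1 := by
      rw [← Matrix.transpose_mul, hPPinv, Matrix.transpose_one]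
    calc -Jm * Φs s t * (Φ s t)⁻¹
        = -(1 * (Jm * Φs s t) * (Φ s t)⁻¹) := by simp [Matrix.mul_assoc]
      _ = -(((Φ s t)⁻¹)ᵀ * (Φ s t)ᵀ * (Jm * Φs s t) * (Φ s t)⁻¹) := by rw [h1]
      _ = ((Φ s t)⁻¹)ᵀ * (-((Φ s t)ᵀ * Jm * Φs s t)) * (Φ s t)⁻¹ := by
          simp [Matrix.mul_assoc]
  refine Matrix.posDef_iff_dotProduct_mulVec.2 ⟨?_, ?_⟩
  · show _ᴴ = _
    rw [Matrix.conjTranspose_eq_transpose_of_trivial, hK]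
    calc (((Φ s t)⁻¹)ᵀ * -((Φ s t)ᵀ * Jm * Φs s t) * (Φ s t)⁻¹)ᵀ
        = ((Φ s t)⁻¹)ᵀ * (-((Φ s t)ᵀ * Jm * Φs s t))ᵀ * (Φ s t)⁻¹ := by
          simp [Matrix.transpose_mul, Matrix.mul_assoc]
      _ = ((Φ s t)⁻¹)ᵀ * -((Φ s t)ᵀ * Jm * Φs s t) * (Φ s t)⁻¹ := by
          rw [Matrix.transpose_neg, hQsymm]
  · intro y hy
    have hy' : y ≠ 0 := hy
    set z := (Φ s t)⁻¹ *ᵥ y with hzdef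
    have hz : z ≠ 0 := by
      intro hz0
      apply hy'
      have : Φ s t *ᵥ z = y := by
        rw [hzdef, Matrix.mulVec_mulVec, hPPinv, Matrix.one_mulVec]
      rw [hz0, Matrix.mulVec_zero] at this
      exact this.symm
    have hstar : star y = y := by
      funext i; exact star_trivial _
    rw [hstar, hK]
    rw [← Matrix.mulVec_mulVec, ← Matrix.mulVec_mulVec, Matrix.dotProduct_mulVec y,
      Matrix.vecMul_transpose, ← hzdef, Matrix.neg_mulVec, dotProduct_neg]
    have := key z hz
    linarith
end

section
/- Let K : ℝ^{2n} → ℝ be a C² function, let C ⊂ ℝ^{2n} be a compact set, and let c ∈ ℝ be such that ∇K does not vanish at any point of K⁻¹(c) ∩ C. Suppose there are a constant T₀ > 0, a sequence c_k → c, and nonconstant T_k-periodic solutions γ_k : ℝ → ℝ^{2n} of γ' = J∇K(γ) with image contained in C, with K(γ_k(t)) = c_k for all t, and with 0 < T_k ≤ T₀. Then there exists a nonconstant periodic solution γ of γ' = J∇K(γ) with image contained in C, with K(γ(t)) = c for all t, and with some period T satisfying 0 < T ≤ T₀. (This is the Arzelà–Ascoli limit step in the proof of the main theorem: periodic orbits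 on nearby levels with uniformly bounded periods converge to a periodic orbit on the limit level with period bounded by the same constant.) -/
/-- `Jstd` as a continuous linear map. -/
noncomputable def Jclm (n : ℕ) :
    EuclideanSpace ℝ (Fin n ⊕ Fin n) →L[ℝ] EuclideanSpace ℝ (Fin n ⊕ Fin n) :=
  LinearMap.toContinuousLinearMap
    { toFun := Jstd n
      map_add' := by
        intro v w; ext i
        cases i <;> simp [Jstd] <;> ring
      map_smul' := by
        intro c v; ext i; cases i <;> simp [Jstd] }

lemma Jclm_apply (n : ℕ) : ⇑(Jclm n) = Jstd n := rfl

lemma Jstd_eq_zero (n : ℕ) (v : EuclideanSpace ℝ (Fin n ⊕ Fin n))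
    (h : Jstd n v = 0) : v = 0 := by
  ext i
  cases i with
  | inl k => have := congrFun (congrArg WithLp.ofLp h) (Sum.inr k); simpa [Jstd] using this
  | inr k =>
    have := congrFun (congrArg WithLp.ofLp h) (Sum.inl k)
    have h2 : -v (Sum.inr k) = 0 := by simpa [Jstd] using this
    exact neg_eq_zero.mp h2

/-- Arzelà–Ascoli limit step: if a regular (for `K` on `C`) value `c` is the
limit of values `c_k` whose levels carry nonconstant periodic orbits `γ_k` of
the Hamiltonian flow of `K` lying in a compact set `C` with periods
`0 < T_k ≤ T₀`, then the level `K = c` also carries a nonconstant periodic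
orbit lying in `C` with some period `T` satisfying `0 < T ≤ T₀`. -/
theorem stmt10 (n : ℕ) (K : EuclideanSpace ℝ (Fin n ⊕ Fin n) → ℝ)
    (hK : ContDiff ℝ 2 K)
    (C : Set (EuclideanSpace ℝ (Fin n ⊕ Fin n))) (hC : IsCompact C)
    (c : ℝ) (hreg : ∀ x ∈ K ⁻¹' {c} ∩ C, gradient K x ≠ 0)
    (T₀ : ℝ) (hT₀ : 0 < T₀)
    (ck : ℕ → ℝ) (hck : Filter.Tendsto ck Filter.atTop (nhds c))
    (γ : ℕ → ℝ → EuclideanSpace ℝ (Fin n ⊕ Fin n)) (Tk : ℕ → ℝ)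
    (hsol : ∀ (j : ℕ) (t : ℝ), HasDerivAt (γ j) (Jstd n (gradient K (γ j t))) t)
    (himg : ∀ (j : ℕ) (t : ℝ), γ j t ∈ C)
    (hlev : ∀ (j : ℕ) (t : ℝ), K (γ j t) = ck j)
    (hper : ∀ (j : ℕ) (t : ℝ), γ j (t + Tk j) = γ j t)
    (hTk : ∀ j : ℕ, 0 < Tk j ∧ Tk j ≤ T₀)
    (hnc : ∀ j : ℕ, ∃ t₁ t₂ : ℝ, γ j t₁ ≠ γ j t₂) :
    ∃ (γ₀ : ℝ → EuclideanSpace ℝ (Fin n ⊕ Fin n)) (T : ℝ),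
      0 < T ∧ T ≤ T₀ ∧
      (∀ t : ℝ, HasDerivAt γ₀ (Jstd n (gradient K (γ₀ t))) t) ∧
      (∀ t : ℝ, γ₀ (t + T) = γ₀ t) ∧
      (∀ t : ℝ, K (γ₀ t) = c) ∧
      (∀ t : ℝ, γ₀ t ∈ C) ∧
      (∃ t₁ t₂ : ℝ, γ₀ t₁ ≠ γ₀ t₂) := by
  classical
  -- the Hamiltonian vector field
  set X : EuclideanSpace ℝ (Fin n ⊕ Fin n) → EuclideanSpace ℝ (Fin n ⊕ Fin n) :=
    fun x => Jclm n (gradient K x) with hXdef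
  have hXsol : ∀ (j : ℕ) (t : ℝ), HasDerivAt (γ j) (X (γ j t)) t := fun j t => hsol j t
  have hX1 : ContDiff ℝ 1 X := by
    have h1 : ContDiff ℝ 1 (fderiv ℝ K) := hK.fderiv_right (by norm_num)
    have h2 : ContDiff ℝ 1 (gradient K) :=
      ((InnerProductSpace.toDual ℝ _).symm.contDiff).comp h1
    exact (Jclm n).contDiff.comp h2
  have hXcont : Continuous X := hX1.continuous
  -- a closed ball containing C
  obtain ⟨R, hRC⟩ : ∃ R, C ⊆ Metric.closedBall 0 R := hC.isBounded.subset_closedBall 0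
  -- Lipschitz constant of X on the closed ball
  obtain ⟨L, hlip⟩ : ∃ L : NNReal, LipschitzOnWith L X (Metric.closedBall 0 R) := by
    have hcont' : ContinuousOn (fderiv ℝ X) (Metric.closedBall 0 R) :=
      (hX1.continuous_fderiv one_ne_zero).continuousOn
    obtain ⟨l, hl⟩ := (isCompact_closedBall
      (0 : EuclideanSpace ℝ (Fin n ⊕ Fin n)) R).exists_bound_of_continuousOn hcont'
    refine ⟨⟨max l 0, le_max_right _ _⟩, ?_⟩
    refine Convex.lipschitzOnWith_of_nnnorm_fderiv_le
      (fun x _ => (hX1.differentiable one_ne_zero).differentiableAt) ?_ (convex_closedBall _ _)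
    intro x hx
    change (‖fderiv ℝ X x‖₊ : ℝ) ≤ max l 0; rw [coe_nnnorm]
    exact (hl x hx).trans (le_max_left _ _)
  have hlipneg : LipschitzOnWith L (fun x => -X x) (Metric.closedBall 0 R) := by
    intro x hx y hy
    simpa [edist_neg_neg] using hlip hx hy
  -- bound on the speed on C
  obtain ⟨M, hM0, hM⟩ : ∃ M, 0 ≤ M ∧ ∀ x ∈ C, ‖X x‖ ≤ M := by
    obtain ⟨M, hM⟩ := hC.exists_bound_of_continuousOn hXcont.continuousOn
    exact ⟨max M 0, le_max_right _ _, fun x hx => (hM x hx).trans (le_max_left _ _)⟩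
  -- every γ j is M-Lipschitz
  have hγLip : ∀ j, LipschitzWith M.toNNReal (γ j) := by
    intro j
    rw [← lipschitzOnWith_univ]
    refine Convex.lipschitzOnWith_of_nnnorm_hasDerivWithin_le convex_univ
      (fun t _ => (hXsol j t).hasDerivWithinAt) ?_
    intro t _
    rw [← NNReal.coe_le_coe, coe_nnnorm, Real.coe_toNNReal _ hM0]
    exact hM _ (himg j t)
  have hγcont : ∀ j, Continuous (γ j) :=
    fun j => continuous_iff_continuousAt.mpr fun t => (hXsol j t).continuousAt
  -- Grönwall comparison estimate
  have key : ∀ (v : EuclideanSpace ℝ (Fin n ⊕ Fin n) → EuclideanSpace ℝ (Fin n ⊕ Fin n)),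
      LipschitzOnWith L v (Metric.closedBall 0 R) →
      ∀ (f g : ℝ → EuclideanSpace ℝ (Fin n ⊕ Fin n)) (A : ℝ),
      Continuous f → Continuous g →
      (∀ s, HasDerivAt f (v (f s)) s) → (∀ s, HasDerivAt g (v (g s)) s) →
      (∀ s, f s ∈ C) → (∀ s, g s ∈ C) → ∀ s ∈ Set.Icc (0:ℝ) A,
      dist (f s) (g s) ≤ dist (f 0) (g 0) * Real.exp (L * s) := by
    intro v hv f g A hfc hgc hf hg hfC hgC s hs
    have := dist_le_of_trajectories_ODE_of_mem (v := fun _ x => v x)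
      (s := fun _ => Metric.closedBall (0 : EuclideanSpace ℝ (Fin n ⊕ Fin n)) R)
      (K := L) (fun _ _ => hv)
      (a := 0) (b := A)
      (hfc.continuousOn) (fun u _ => (hf u).hasDerivWithinAt)
      (fun u _ => hRC (hfC u)) (hgc.continuousOn)
      (fun u _ => (hg u).hasDerivWithinAt) (fun u _ => hRC (hgC u))
      (le_refl (dist (f 0) (g 0))) s hs
    simpa using this
  have hest : ∀ (i j : ℕ) (A t : ℝ), 0 ≤ A → |t| ≤ A →
      dist (γ i t) (γ j t) ≤ dist (γ i 0) (γ j 0) * Real.exp (L * A) := by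
    intro i j A t hA ht
    have hexp : Real.exp ((L : ℝ) * |t|) ≤ Real.exp ((L : ℝ) * A) :=
      Real.exp_le_exp.2 (mul_le_mul_of_nonneg_left ht L.coe_nonneg)
    have main : dist (γ i t) (γ j t) ≤ dist (γ i 0) (γ j 0) * Real.exp (L * |t|) := by
      rcases le_or_gt 0 t with h0 | h0
      · have := key X hlip (γ i) (γ j) A (hγcont i) (hγcont j) (hXsol i) (hXsol j)
          (himg i) (himg j) t ⟨h0, abs_le.1 ht |>.2.trans le_rfl⟩
        calc dist (γ i t) (γ j t) ≤ dist (γ i 0) (γ j 0) * Real.exp (L * t) := this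
          _ ≤ dist (γ i 0) (γ j 0) * Real.exp (L * |t|) := by
              apply mul_le_mul_of_nonneg_left _ dist_nonneg
              exact Real.exp_le_exp.2 (mul_le_mul_of_nonneg_left (le_abs_self t) L.coe_nonneg)
      · -- reverse time
        have hrev : ∀ (j' : ℕ) (s : ℝ),
            HasDerivAt (fun u => γ j' (-u)) (-(X (γ j' (-s)))) s := by
          intro j' s
          have h1 : HasDerivAt (fun u : ℝ => -u) (-1) s := hasDerivAt_neg' s
          have h2 := (hXsol j' (-s)).scomp s h1
          simpa [Function.comp_def] using h2
        have := key (fun x => -X x) hlipneg (fun u => γ i (-u)) (fun u => γ j (-u)) A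
          ((hγcont i).comp continuous_neg) ((hγcont j).comp continuous_neg)
          (hrev i) (hrev j) (fun s => himg i (-s)) (fun s => himg j (-s))
          (-t) ⟨by linarith, by rw [abs_of_neg h0] at ht; linarith⟩
        simp only [neg_neg, neg_zero] at this
        calc dist (γ i t) (γ j t) ≤ dist (γ i 0) (γ j 0) * Real.exp (L * (-t)) := this
          _ = dist (γ i 0) (γ j 0) * Real.exp (L * |t|) := by rw [abs_of_neg h0]
    exact main.trans (mul_le_mul_of_nonneg_left hexp dist_nonneg)
  -- adjusted periods in (T₀/2, T₀]
  set T' : ℕ → ℝ := fun j => (⌊T₀ / Tk j⌋₊ : ℝ) * Tk j with hT'def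
  have hT'per : ∀ j t, γ j (t + T' j) = γ j t := by
    intro j t
    have hp : Function.Periodic (γ j) (Tk j) := hper j
    simpa [hT'def] using (hp.nat_mul ⌊T₀ / Tk j⌋₊) t
  have hT'mem : ∀ j, T' j ∈ Set.Ioc (T₀ / 2) T₀ := by
    intro j
    obtain ⟨h1, h2⟩ := hTk j
    have hq1 : 1 ≤ T₀ / Tk j := (one_le_div h1).2 h2
    constructor
    · have hfl : T₀ / Tk j / 2 < (⌊T₀ / Tk j⌋₊ : ℝ) := by
        rcases le_or_gt 2 (T₀ / Tk j) with h | h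
        · have := Nat.sub_one_lt_floor (T₀ / Tk j)
          linarith
        · have hone : (1 : ℝ) ≤ (⌊T₀ / Tk j⌋₊ : ℝ) := by
            exact_mod_cast Nat.le_floor (by exact_mod_cast hq1)
          linarith
      calc T₀ / 2 = T₀ / Tk j / 2 * Tk j := by field_simp
        _ < (⌊T₀ / Tk j⌋₊ : ℝ) * Tk j := mul_lt_mul_of_pos_right hfl h1
    · calc (⌊T₀ / Tk j⌋₊ : ℝ) * Tk j ≤ T₀ / Tk j * Tk j :=
          mul_le_mul_of_nonneg_right (Nat.floor_le (by positivity)) h1.le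
        _ = T₀ := by field_simp
  -- subsequence extraction
  obtain ⟨x₀, hx₀C, φ, hφ, hφconv⟩ := hC.isSeqCompact (x := fun j => γ j 0) (fun j => himg j 0)
  obtain ⟨T, hTmem, ψ', hψ', hT'conv⟩ := (isCompact_Icc (a := T₀ / 2) (b := T₀)).isSeqCompact
    (x := fun j => T' (φ j)) (fun j => Set.Ioc_subset_Icc_self (hT'mem (φ j)))
  set ψ : ℕ → ℕ := φ ∘ ψ' with hψdef
  have hψmono : StrictMono ψ := hφ.comp hψ'
  have hx0 : Filter.Tendsto (fun k => γ (ψ k) 0) Filter.atTop (nhds x₀) :=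
    hφconv.comp hψ'.tendsto_atTop
  have hTconv : Filter.Tendsto (fun k => T' (ψ k)) Filter.atTop (nhds T) := hT'conv
  -- pointwise limits
  have hcauchy : ∀ t : ℝ, ∃ y, Filter.Tendsto (fun k => γ (ψ k) t) Filter.atTop (nhds y) := by
    intro t
    apply cauchySeq_tendsto_of_complete
    rw [Metric.cauchySeq_iff]
    intro ε hε
    have hc0 : CauchySeq fun k => γ (ψ k) 0 := hx0.cauchySeq
    rw [Metric.cauchySeq_iff] at hc0
    have hEpos : (0 : ℝ) < Real.exp (L * |t|) := Real.exp_pos _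
    obtain ⟨N, hN⟩ := hc0 (ε / Real.exp (L * |t|)) (by positivity)
    refine ⟨N, fun m hm k hk => ?_⟩
    calc dist (γ (ψ m) t) (γ (ψ k) t)
        ≤ dist (γ (ψ m) 0) (γ (ψ k) 0) * Real.exp (L * |t|) :=
          hest (ψ m) (ψ k) |t| t (abs_nonneg t) le_rfl
      _ < ε / Real.exp (L * |t|) * Real.exp (L * |t|) :=
          mul_lt_mul_of_pos_right (hN m hm k hk) hEpos
      _ = ε := by field_simp
  choose γ₀ hγ₀ using hcauchy
  -- refined estimate against the limit
  have hestlim : ∀ (k : ℕ) (A t : ℝ), 0 ≤ A → |t| ≤ A →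
      dist (γ (ψ k) t) (γ₀ t) ≤ dist (γ (ψ k) 0) x₀ * Real.exp (L * A) := by
    intro k A t hA ht
    have h1 : Filter.Tendsto (fun m => dist (γ (ψ k) t) (γ (ψ m) t)) Filter.atTop
        (nhds (dist (γ (ψ k) t) (γ₀ t))) := tendsto_const_nhds.dist (hγ₀ t)
    have h2 : Filter.Tendsto (fun m => dist (γ (ψ k) 0) (γ (ψ m) 0) * Real.exp (L * A))
        Filter.atTop (nhds (dist (γ (ψ k) 0) x₀ * Real.exp (L * A))) :=
      (tendsto_const_nhds.dist hx0).mul_const _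
    exact le_of_tendsto_of_tendsto' h1 h2 fun m => hest (ψ k) (ψ m) A t hA ht
  -- basic properties of the limit
  have hγ₀C : ∀ t, γ₀ t ∈ C := fun t =>
    hC.isClosed.mem_of_tendsto (hγ₀ t) (Filter.Eventually.of_forall fun k => himg _ t)
  have hγ₀lev : ∀ t, K (γ₀ t) = c := by
    intro t
    have h1 : Filter.Tendsto (fun k => K (γ (ψ k) t)) Filter.atTop (nhds (K (γ₀ t))) :=
      (hK.continuous.continuousAt.tendsto).comp (hγ₀ t)
    have h2 : Filter.Tendsto (fun k => K (γ (ψ k) t)) Filter.atTop (nhds c) := by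
      simp only [hlev]; exact hck.comp hψmono.tendsto_atTop
    exact tendsto_nhds_unique h1 h2
  -- uniform convergence on compact intervals
  have huγ : ∀ A : ℝ, 0 ≤ A → TendstoUniformlyOn (fun k s => γ (ψ k) s) γ₀
      Filter.atTop (Set.Icc (-A) A) := by
    intro A hA
    rw [Metric.tendstoUniformlyOn_iff]
    intro ε hε
    have hd0 : Filter.Tendsto (fun k => dist (γ (ψ k) 0) x₀ * Real.exp (L * A))
        Filter.atTop (nhds 0) := by
      have : Filter.Tendsto (fun k => dist (γ (ψ k) 0) x₀) Filter.atTop (nhds 0) :=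
        tendsto_iff_dist_tendsto_zero.mp hx0
      simpa using this.mul_const (Real.exp (L * A))
    filter_upwards [hd0.eventually (gt_mem_nhds hε)] with k hk s hs
    have habs : |s| ≤ A := abs_le.2 ⟨hs.1, hs.2⟩
    calc dist (γ₀ s) (γ (ψ k) s) = dist (γ (ψ k) s) (γ₀ s) := dist_comm _ _
      _ ≤ dist (γ (ψ k) 0) x₀ * Real.exp (L * A) := hestlim k A s hA habs
      _ < ε := hk
  -- the limit is a solution
  have hder : ∀ t : ℝ, HasDerivAt γ₀ (X (γ₀ t)) t := by
    intro t
    have hA : (0 : ℝ) ≤ |t| + 1 := by positivity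
    have hXu : TendstoUniformlyOn (fun k s => X (γ (ψ k) s)) (fun s => X (γ₀ s))
        Filter.atTop (Set.Icc (-(|t| + 1)) (|t| + 1)) := by
      rw [Metric.tendstoUniformlyOn_iff]
      intro ε hε
      have hucX : UniformContinuousOn X C :=
        hC.uniformContinuousOn_of_continuous hXcont.continuousOn
      rw [Metric.uniformContinuousOn_iff] at hucX
      obtain ⟨δ, hδ, hδ'⟩ := hucX ε hε
      have := huγ (|t| + 1) hA
      rw [Metric.tendstoUniformlyOn_iff] at this
      filter_upwards [this δ hδ] with k hk s hs
      exact hδ' (γ₀ s) (hγ₀C s) (γ (ψ k) s) (himg _ s) (hk s hs)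
    refine hasDerivAt_of_tendstoUniformlyOn (f := fun k => γ (ψ k))
      (f' := fun k s => X (γ (ψ k) s)) isOpen_Ioo
      (hXu.mono Set.Ioo_subset_Icc_self)
      (Filter.Eventually.of_forall fun k s _ => hXsol (ψ k) s)
      (fun s _ => hγ₀ s) ?_
    exact Set.mem_Ioo.2 ⟨by linarith [neg_abs_le t], by linarith [le_abs_self t]⟩
  -- periodicity of the limit
  have hγ₀per : ∀ t, γ₀ (t + T) = γ₀ t := by
    intro t
    have h1 : Filter.Tendsto (fun k => dist (γ (ψ k) (t + T)) (γ (ψ k) t)) Filter.atTop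
        (nhds (dist (γ₀ (t + T)) (γ₀ t))) := (hγ₀ (t + T)).dist (hγ₀ t)
    have h2 : Filter.Tendsto (fun k => M * |T - T' (ψ k)|) Filter.atTop (nhds 0) := by
      have h3 : Filter.Tendsto (fun k => T - T' (ψ k)) Filter.atTop (nhds 0) := by
        simpa using (tendsto_const_nhds (x := T)).sub hTconv
      have h4 := h3.abs
      simp only [abs_zero] at h4
      simpa using h4.const_mul M
    have hb : ∀ k, dist (γ (ψ k) (t + T)) (γ (ψ k) t) ≤ M * |T - T' (ψ k)| := by
      intro k
      have hp := hT'per (ψ k) t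
      calc dist (γ (ψ k) (t + T)) (γ (ψ k) t)
          = dist (γ (ψ k) (t + T)) (γ (ψ k) (t + T' (ψ k))) := by rw [hp]
        _ ≤ M.toNNReal * dist (t + T) (t + T' (ψ k)) := (hγLip (ψ k)).dist_le_mul _ _
        _ = M * |T - T' (ψ k)| := by
            rw [Real.dist_eq, Real.coe_toNNReal _ hM0, add_sub_add_left_eq_sub]
    have : dist (γ₀ (t + T)) (γ₀ t) ≤ 0 := le_of_tendsto_of_tendsto' h1 h2 hb
    exact dist_le_zero.1 this
  -- the limit is nonconstant
  have hncγ₀ : ∃ t₁ t₂, γ₀ t₁ ≠ γ₀ t₂ := by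
    by_contra h
    push_neg at h
    have hgrad : gradient K (γ₀ 0) ≠ 0 :=
      hreg _ ⟨by simpa using hγ₀lev 0, hγ₀C 0⟩
    have hd : HasDerivAt γ₀ 0 0 := by
      have hc : HasDerivAt (fun _ : ℝ => γ₀ 0) (0 : EuclideanSpace ℝ (Fin n ⊕ Fin n)) 0 :=
        hasDerivAt_const _ _
      exact hc.congr_of_eventuallyEq (Filter.Eventually.of_forall fun s => h s 0)
    have hzero : X (γ₀ 0) = 0 := (hder 0).unique hd
    exact hgrad (Jstd_eq_zero n _ hzero)
  refine ⟨γ₀, T, ?_, hTmem.2, fun t => hder t, hγ₀per, hγ₀lev, hγ₀C, hncγ₀⟩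
  have := hTmem.1
  linarith
end

section
/- Let X : ℝ^m → ℝ^m be a continuous vector field and C ⊂ ℝ^m a compact set on which X has no zeros. Then there exists τ > 0 such that every nonconstant periodic solution γ of γ' = X(γ) whose image is contained in C has every period ≥ τ; that is, periods of periodic orbits in a compact region free of rest points are bounded away from zero. (This lower bound on periods is what guarantees that, in the Arzelà–Ascoli limit argument of the paper, the limiting periodic orbit on a regular energy level is nonconstant.) -/
/-- Periods of periodic orbits in a compact region free of rest points are
bounded away from zero: if `X` is a continuous vector field with no zeros on
a compact set `C`, then there is `τ > 0` such that every nonconstant periodic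
solution of `γ' = X(γ)` with image contained in `C` has every period `≥ τ`. -/
theorem stmt11 (m : ℕ)
    (X : EuclideanSpace ℝ (Fin m) → EuclideanSpace ℝ (Fin m))
    (hX : Continuous X)
    (C : Set (EuclideanSpace ℝ (Fin m))) (hC : IsCompact C)
    (hXC : ∀ x ∈ C, X x ≠ 0) :
    ∃ τ > (0 : ℝ), ∀ γ : ℝ → EuclideanSpace ℝ (Fin m),
      (∀ t : ℝ, HasDerivAt γ (X (γ t)) t) →
      (∀ t : ℝ, γ t ∈ C) →
      (∃ t₁ t₂ : ℝ, γ t₁ ≠ γ t₂) →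
      ∀ T : ℝ, 0 < T → (∀ t : ℝ, γ (t + T) = γ t) → τ ≤ T := by
  rcases C.eq_empty_or_nonempty with hCe | hCne
  · exact ⟨1, one_pos, fun γ _ hγC _ _ _ _ => absurd (hγC 0) (by simp [hCe])⟩
  obtain ⟨x₀, hx₀C, hx₀min⟩ := hC.exists_isMinOn hCne hX.norm.continuousOn
  set ε := ‖X x₀‖ with hεdef
  have hεpos : 0 < ε := norm_pos_iff.mpr (hXC x₀ hx₀C)
  obtain ⟨x₁, hx₁C, hx₁max⟩ := hC.exists_isMaxOn hCne hX.norm.continuousOn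
  set M := ‖X x₁‖ with hMdef
  have hMpos : 0 < M := lt_of_lt_of_le hεpos (hx₀min hx₁C)
  have hUC : UniformContinuousOn X C :=
    hC.uniformContinuousOn_of_continuous hX.continuousOn
  rw [Metric.uniformContinuousOn_iff] at hUC
  obtain ⟨δ, hδpos, hδ⟩ := hUC ε hεpos
  refine ⟨δ / M, div_pos hδpos hMpos, ?_⟩
  intro γ hγ hγC _ T hT hTper
  by_contra hlt
  push_neg at hlt
  set c := X (γ 0) with hcdef
  have hder : ∀ t : ℝ, HasDerivAt (fun s => (inner ℝ c (γ s) : ℝ))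
      (inner ℝ c (X (γ t)) : ℝ) t := by
    intro t
    have h := (hasDerivAt_const t c).inner ℝ (hγ t)
    simpa using h
  -- displacement bound
  have hdisp : ∀ t ∈ Set.Icc (0:ℝ) T, ‖γ t - γ 0‖ ≤ M * t := by
    intro t ht
    have key : ∀ s ∈ Set.Icc (0:ℝ) T, HasDerivWithinAt γ (X (γ s)) (Set.Icc 0 T) s :=
      fun s _ => (hγ s).hasDerivWithinAt
    have hbd : ∀ s ∈ Set.Icc (0:ℝ) T, ‖X (γ s)‖ ≤ M := fun s _ => hx₁max (hγC s)
    have := Convex.norm_image_sub_le_of_norm_hasDerivWithin_le key hbd (convex_Icc 0 T)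
      (Set.left_mem_Icc.mpr hT.le) ht
    simpa [abs_of_nonneg ht.1] using this
  have hdist : ∀ t ∈ Set.Icc (0:ℝ) T, dist (γ 0) (γ t) < δ := by
    intro t ht
    have h1 : ‖γ t - γ 0‖ ≤ M * t := hdisp t ht
    have h2 : M * t < δ := by
      calc M * t ≤ M * T := by nlinarith [ht.2]
        _ < M * (δ / M) := by nlinarith
        _ = δ := by field_simp
    rw [dist_comm, dist_eq_norm]
    linarith
  have hpos : ∀ t ∈ Set.Icc (0:ℝ) T, 0 < (inner ℝ c (X (γ t)) : ℝ) := by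
    intro t ht
    have h1 : ε ≤ ‖c‖ := hx₀min (hγC 0)
    have h2 : dist (X (γ 0)) (X (γ t)) < ε := hδ (γ 0) (hγC 0) (γ t) (hγC t) (hdist t ht)
    rw [dist_eq_norm] at h2
    have h3 : (inner ℝ c (c - X (γ t)) : ℝ) ≤ ‖c‖ * ‖c - X (γ t)‖ := real_inner_le_norm _ _
    have h4 : (inner ℝ c (X (γ t)) : ℝ) = ‖c‖ ^ 2 - inner ℝ c (c - X (γ t)) := by
      rw [inner_sub_right, real_inner_self_eq_norm_sq]; ring
    have h5 : ‖c - X (γ t)‖ < ε := h2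
    nlinarith [norm_nonneg (c - X (γ t))]
  have hmono : StrictMonoOn (fun s => (inner ℝ c (γ s) : ℝ)) (Set.Icc 0 T) := by
    apply strictMonoOn_of_deriv_pos (convex_Icc 0 T)
    · exact Continuous.continuousOn (continuous_iff_continuousAt.mpr
        fun t => (hder t).continuousAt)
    · intro t ht
      rw [interior_Icc] at ht
      rw [(hder t).deriv]
      exact hpos t ⟨ht.1.le, ht.2.le⟩
  have h0T : (inner ℝ c (γ 0) : ℝ) < inner ℝ c (γ T) :=
    hmono (Set.left_mem_Icc.mpr hT.le) (Set.right_mem_Icc.mpr hT.le) hT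
  have : γ T = γ 0 := by simpa using hTper 0
  rw [this] at h0T
  exact lt_irrefl _ h0T
end
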